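/- In SL(2,ℤ), each element conjugate to the image of XY in PSL(2,ℤ) lifts to a unique element of the conjugacy class of XY in SL(2,ℤ); equivalently, for every g in PSL(2,ℤ) conjugate to XY there is exactly one of its two preimages in SL(2,ℤ) that is conjugate in SL(2,ℤ) to the matrix XY. -/

import Mathlib

/-- `SL(2,ℤ)`. -/
abbrev SL2Z := Matrix.SpecialLinearGroup (Fin 2) ℤ

/-- The matrix `X = [[-1,1],[-1,0]]`, of order 3 in `PSL(2,ℤ)`. -/
def Xm : SL2Z := ⟨!![(-1 : ℤ), 1; -1, 0], by norm_num [Matrix.det_fin_two_of]⟩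

/-- The matrix `Y = [[0,-1],[1,0]]`, of order 2 in `PSL(2,ℤ)`. -/
def Ym : SL2Z := ⟨!![(0 : ℤ), -1; 1, 0], by norm_num [Matrix.det_fin_two_of]⟩

/-- The modular group `PSL(2,ℤ) = SL(2,ℤ)/{±1}`. -/
abbrev PSL2Z := SL2Z ⧸ Subgroup.center SL2Z

/-- The canonical projection `SL(2,ℤ) → PSL(2,ℤ)`. -/
def π : SL2Z →* PSL2Z := QuotientGroup.mk' (Subgroup.center SL2Z)

/-- Conjugate elements of `SL(2,ℤ)` have equal trace. -/
lemma trace_eq_of_isConj {A B : SL2Z} (h : IsConj A B) :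
    Matrix.trace A.1 = Matrix.trace B.1 := by
  obtain ⟨c, hc⟩ := isConj_iff.mp h
  have h1 : B.1 = c.1 * A.1 * (c⁻¹).1 := by rw [← hc]; simp
  rw [h1, Matrix.trace_mul_cycle]
  have h2 : (c⁻¹).1 * c.1 = (1 : SL2Z).1 := by
    rw [← Matrix.SpecialLinearGroup.coe_mul, inv_mul_cancel]
  rw [h2]
  simp

/-- The center of `SL(2,ℤ)` is `{±1}`. -/
lemma center_pm {z : SL2Z} (hz : z ∈ Subgroup.center SL2Z) : z = 1 ∨ z = -1 := by
  have hT := (Subgroup.mem_center_iff.mp hz (Xm * Ym)).symm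
  have hS := (Subgroup.mem_center_iff.mp hz Ym).symm
  have hT' : z.1 * (Xm * Ym).1 = (Xm * Ym).1 * z.1 := by
    rw [← Matrix.SpecialLinearGroup.coe_mul, ← Matrix.SpecialLinearGroup.coe_mul, hT]
  have hS' : z.1 * Ym.1 = Ym.1 * z.1 := by
    rw [← Matrix.SpecialLinearGroup.coe_mul, ← Matrix.SpecialLinearGroup.coe_mul, hS]
  rw [Matrix.SpecialLinearGroup.coe_mul] at hT'
  have e1 := congrFun (congrFun hT' 0) 0
  have e2 := congrFun (congrFun hT' 0) 1
  have e3 := congrFun (congrFun hS' 0) 0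
  have e4 := congrFun (congrFun hS' 0) 1
  simp [Xm, Ym, Matrix.mul_apply, Fin.sum_univ_two,
    Matrix.SpecialLinearGroup.coe_mul] at e1 e2 e3 e4
  have hdet : z.1.det = 1 := z.2
  rw [Matrix.det_fin_two] at hdet
  have h10 : z.1 1 0 = 0 := e1
  have h01 : z.1 0 1 = 0 := by omega
  have ha : z.1 0 0 = 1 ∨ z.1 0 0 = -1 := by
    have : z.1 0 0 * z.1 0 0 = 1 := by rw [e4] at *; nlinarith [hdet]
    exact mul_self_eq_one_iff.mp this
  rcases ha with h | h
  · left
    apply Subtype.ext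
    ext i j
    fin_cases i <;> fin_cases j <;> simp_all
  · right
    apply Subtype.ext
    ext i j
    fin_cases i <;> fin_cases j <;> simp_all

theorem stmt_7 (g : PSL2Z) (hg : IsConj (π (Xm * Ym)) g) :
    ∃! h : SL2Z, π h = g ∧ IsConj (Xm * Ym) h := by
  obtain ⟨c, hc⟩ := isConj_iff.mp hg
  obtain ⟨P, hP⟩ := QuotientGroup.mk'_surjective (Subgroup.center SL2Z) c
  have hP' : π P = c := hP
  set h : SL2Z := P * (Xm * Ym) * P⁻¹ with hh
  have hπh : π h = g := by
    rw [← hc, hh, map_mul, map_mul, map_inv, hP']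
  have hconjh : IsConj (Xm * Ym) h := isConj_iff.mpr ⟨P, rfl⟩
  refine ⟨h, ⟨hπh, hconjh⟩, ?_⟩
  rintro h' ⟨hπ', hconj'⟩
  have hmk : π h' = π h := by rw [hπ', hπh]
  obtain ⟨z, hzN, hz⟩ := (QuotientGroup.mk'_eq_mk' _).mp hmk
  rcases center_pm hzN with rfl | rfl
  · simpa using hz
  · exfalso
    have t1 : Matrix.trace (Xm * Ym).1 = 2 := by
      rw [Matrix.SpecialLinearGroup.coe_mul]
      simp [Xm, Ym, Matrix.trace_fin_two, Matrix.mul_apply, Fin.sum_univ_two,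
        Matrix.SpecialLinearGroup.coe_mul]
    have t2 := trace_eq_of_isConj hconj'
    have t3 := trace_eq_of_isConj hconjh
    have hneg : h = -h' := by rw [← hz]; simp
    rw [hneg] at t3
    have hcoe : (-h' : SL2Z).1 = -(h'.1) := by simp
    rw [hcoe, Matrix.trace_neg] at t3
    omega
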